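/- For any real square matrix A, the entrywise absolute value of the matrix exponential satisfies |e^A| ≤ e^{ψ(A)} entrywise, where ψ(A) is the matrix obtained from A by replacing each off-diagonal entry with its absolute value and leaving diagonal entries unchanged. -/

import Mathlib

noncomputable def entAbs {m n : ℕ} (A : Matrix (Fin m) (Fin n) ℝ) : Matrix (Fin m) (Fin n) ℝ :=
  Matrix.of fun i j => |A i j|

noncomputable def metzlerPart {n : ℕ} (A : Matrix (Fin n) (Fin n) ℝ) : Matrix (Fin n) (Fin n) ℝ :=
  Matrix.of fun i j => if i = j then A i j else |A i j|

open NormedSpace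

section aux

variable {n : ℕ}

/-- entrywise domination is preserved by powers -/
lemma pow_entry_abs_le (B M : Matrix (Fin n) (Fin n) ℝ)
    (h : ∀ i j, |B i j| ≤ M i j) (m : ℕ) : ∀ i j, |(B ^ m) i j| ≤ (M ^ m) i j := by
  induction m with
  | zero =>
    intro i j
    simp only [pow_zero, Matrix.one_apply]
    split <;> simp
  | succ m ih =>
    intro i j
    rw [pow_succ, pow_succ, Matrix.mul_apply, Matrix.mul_apply]
    refine (Finset.abs_sum_le_sum_abs _ _).trans (Finset.sum_le_sum fun k _ => ?_)
    rw [abs_mul]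
    exact mul_le_mul (ih i k) (h k j) (abs_nonneg _) ((abs_nonneg _).trans (ih i k))

/-- the entry of a matrix exponential equals the sum of entries of the series -/
lemma exp_entry (B : Matrix (Fin n) (Fin n) ℝ) (i j : Fin n) :
    exp B i j = ∑' m : ℕ, ((m.factorial : ℝ))⁻¹ * (B ^ m) i j := by
  classical
  letI : SeminormedRing (Matrix (Fin n) (Fin n) ℝ) := Matrix.linftyOpSemiNormedRing
  letI : NormedRing (Matrix (Fin n) (Fin n) ℝ) := Matrix.linftyOpNormedRing
  letI : NormedAlgebra ℝ (Matrix (Fin n) (Fin n) ℝ) := Matrix.linftyOpNormedAlgebra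
  let f : Matrix (Fin n) (Fin n) ℝ →ₗ[ℝ] ℝ :=
    { toFun := fun M => M i j
      map_add' := fun _ _ => rfl
      map_smul' := fun _ _ => rfl }
  have hf : Continuous f := f.continuous_of_finiteDimensional
  have h := (expSeries_summable' (𝕂 := ℝ) B).hasSum
  have h2 := h.map f hf
  have h3 : f (exp B) = ∑' m : ℕ, f (((m.factorial : ℝ))⁻¹ • B ^ m) := by
    rw [exp_eq_tsum ℝ]
    exact h2.tsum_eq.symm
  exact h3

lemma entry_series_summable (B : Matrix (Fin n) (Fin n) ℝ) (i j : Fin n) :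
    Summable fun m : ℕ => ((m.factorial : ℝ))⁻¹ * (B ^ m) i j := by
  classical
  letI : SeminormedRing (Matrix (Fin n) (Fin n) ℝ) := Matrix.linftyOpSemiNormedRing
  letI : NormedRing (Matrix (Fin n) (Fin n) ℝ) := Matrix.linftyOpNormedRing
  letI : NormedAlgebra ℝ (Matrix (Fin n) (Fin n) ℝ) := Matrix.linftyOpNormedAlgebra
  let f : Matrix (Fin n) (Fin n) ℝ →ₗ[ℝ] ℝ :=
    { toFun := fun M => M i j
      map_add' := fun _ _ => rfl
      map_smul' := fun _ _ => rfl }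
  have hf : Continuous f := f.continuous_of_finiteDimensional
  have := (expSeries_summable' (𝕂 := ℝ) B).map f hf
  exact this

/-- core inequality for matrices dominated entrywise -/
lemma abs_exp_entry_le (B M : Matrix (Fin n) (Fin n) ℝ)
    (h : ∀ i j, |B i j| ≤ M i j) (i j : Fin n) :
    |exp B i j| ≤ exp M i j := by
  rw [exp_entry B i j, exp_entry M i j]
  have hB := entry_series_summable B i j
  have hM := entry_series_summable M i j
  calc |∑' m : ℕ, ((m.factorial : ℝ))⁻¹ * (B ^ m) i j|
      ≤ ∑' m : ℕ, ((m.factorial : ℝ))⁻¹ * |(B ^ m) i j| := by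
        simpa [Real.norm_eq_abs, abs_mul, abs_inv, Nat.abs_cast] using
          norm_tsum_le_tsum_norm (f := fun m : ℕ => ((m.factorial : ℝ))⁻¹ * (B ^ m) i j)
            (by simpa [Real.norm_eq_abs, abs_mul, abs_inv, Nat.abs_cast] using hB.abs)
    _ ≤ ∑' m : ℕ, ((m.factorial : ℝ))⁻¹ * (M ^ m) i j := by
        refine Summable.tsum_le_tsum (fun m => ?_)
          (by simpa [abs_mul, abs_inv, Nat.abs_cast] using hB.abs) hM
        exact mul_le_mul_of_nonneg_left (pow_entry_abs_le B M h m i j) (by positivity)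

lemma exp_add_smul_one (B : Matrix (Fin n) (Fin n) ℝ) (c : ℝ) :
    exp (B + c • (1 : Matrix (Fin n) (Fin n) ℝ)) = Real.exp c • exp B := by
  rw [Matrix.exp_add_of_commute B (c • 1) (Commute.smul_right (Commute.one_right B) c)]
  rw [Matrix.smul_one_eq_diagonal, Matrix.exp_diagonal]
  ext i j
  simp [Matrix.mul_apply, Matrix.diagonal_apply, ← Real.exp_eq_exp_ℝ, mul_comm]

end aux

theorem abs_exp_le_exp_metzlerPart {n : ℕ} (A : Matrix (Fin n) (Fin n) ℝ) :
    ∀ i j, entAbs (NormedSpace.exp A) i j ≤ NormedSpace.exp (metzlerPart A) i j := by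
  intro i j
  set c : ℝ := ∑ k : Fin n, |A k k| with hc
  have hck : ∀ k : Fin n, |A k k| ≤ c := fun k =>
    Finset.single_le_sum (fun k _ => abs_nonneg (A k k)) (Finset.mem_univ k)
  have hdom : ∀ i j, |(A + c • (1 : Matrix (Fin n) (Fin n) ℝ)) i j|
      ≤ (metzlerPart A + c • (1 : Matrix (Fin n) (Fin n) ℝ)) i j := by
    intro i j
    by_cases hij : i = j
    · subst hij
      simp only [Matrix.add_apply, Matrix.smul_apply, Matrix.one_apply_eq, smul_eq_mul, mul_one,
        metzlerPart, Matrix.of_apply, if_pos rfl]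
      rw [abs_of_nonneg (by linarith [neg_abs_le (A i i), hck i])]
      simp
    · simp only [Matrix.add_apply, Matrix.smul_apply, Matrix.one_apply_ne hij, smul_eq_mul,
        mul_zero, add_zero, metzlerPart, Matrix.of_apply, if_neg hij, le_refl]
  have key := abs_exp_entry_le _ _ hdom i j
  rw [exp_add_smul_one A c, exp_add_smul_one (metzlerPart A) c] at key
  simp only [Matrix.smul_apply, smul_eq_mul, abs_mul, abs_of_pos (Real.exp_pos c)] at key
  have := (mul_le_mul_iff_of_pos_left (Real.exp_pos c)).mp key
  simpa [entAbs] using this
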